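/- Let A be a proper connective dg algebra and d ≥ 1 with A ∈ H^d := D^fd(A)^{≤0} ∩ D^fd(A)^{>-d}. Then, as an extriangulated category (with E(X,Y) = Hom(X, Y[1])), H^d has enough projectives, and the projective objects are exactly add(A). -/

import Mathlib

open CategoryTheory Category Limits Pretriangulated Triangulated ZeroObject

universe w v u

namespace Paper

section Defs

variable {C : Type u} [Category.{v} C] [Preadditive C] [HasZeroObject C]
  [HasShift C ℤ] [∀ n : ℤ, (shiftFunctor C n).Additive] [Pretriangulated C]
  [HasFiniteBiproducts C] [HasBinaryBiproducts C]

/-- `X` lies in `add A`: it is a direct summand of a finite direct sum of copies of `A`. -/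
def inAdd (A X : C) : Prop :=
  ∃ (n : ℕ) (s : X ⟶ ⨁ fun _ : Fin n => A) (p : (⨁ fun _ : Fin n => A) ⟶ X), s ≫ p = 𝟙 X

/-- The star operation `S ∗ T` on classes of objects of a (pre)triangulated category:
objects `E` admitting a distinguished triangle `X ⟶ E ⟶ Y ⟶ X⟦1⟧` with `X ∈ S`, `Y ∈ T`. -/
def star (S T : Set C) : Set C :=
  {E | ∃ (X : C) (_ : X ∈ S) (Y : C) (_ : Y ∈ T) (f : X ⟶ E) (g : E ⟶ Y)
    (h : Y ⟶ X⟦(1 : ℤ)⟧), Triangle.mk f g h ∈ distTriang C}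

/-- `add (A⟦i⟧)` as a class of objects. -/
def addShift (A : C) (i : ℤ) : Set C := {X | inAdd (A⟦i⟧) X}

/-- `per(A)^{[-n,0]} = add(A) ∗ add(A)[1] ∗ ⋯ ∗ add(A)[n]`. -/
def perInterval (A : C) : ℕ → Set C
  | 0 => addShift A 0
  | n + 1 => star (perInterval A n) (addShift A (n + 1))

/-- `thick(DA)^{[0,n]} = add(DA)[-n] ∗ ⋯ ∗ add(DA)[-1] ∗ add(DA)`. -/
def coInterval (DA : C) : ℕ → Set C
  | 0 => addShift DA 0
  | n + 1 => star (addShift DA (-(n + 1 : ℕ))) (coInterval DA n)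

/-- The extended heart `H^d = T^{≤ 0} ∩ T^{> -d}`. -/
def Hd (t : TStructure C) (d : ℕ) : Set C := {X | t.le 0 X ∧ t.ge (1 - (d : ℤ)) X}

/-- Projectivity in the extriangulated category given by an extension-closed class `S`:
`E(P, X) = Hom(P, X⟦1⟧)` vanishes for all `X ∈ S`. -/
def projOn (S : Set C) (P : C) : Prop := ∀ X ∈ S, ∀ f : P ⟶ X⟦(1 : ℤ)⟧, f = 0

/-- Injectivity in the extriangulated category given by an extension-closed class `S`. -/
def injOn (S : Set C) (I : C) : Prop := ∀ X ∈ S, ∀ f : X ⟶ I⟦(1 : ℤ)⟧, f = 0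

/-- `p : M ⟶ N` is a deflation for the extriangulated structure on the extension-closed
class `S`: it is the second map of a distinguished triangle with all terms in `S`. -/
def isDeflation (S : Set C) {M N : C} (p : M ⟶ N) : Prop :=
  ∃ (L : C) (_ : L ∈ S) (f : L ⟶ M) (h : N ⟶ L⟦(1 : ℤ)⟧),
    Triangle.mk f p h ∈ distTriang C

/-- `i : L ⟶ M` is an inflation for the extriangulated structure on `S`. -/
def isInflation (S : Set C) {L M : C} (i : L ⟶ M) : Prop :=
  ∃ (N : C) (_ : N ∈ S) (p : M ⟶ N) (h : N ⟶ L⟦(1 : ℤ)⟧),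
    Triangle.mk i p h ∈ distTriang C

/-- `f` factors through an object of `add W`. -/
def factorsThruAdd (W : C) {X Y : C} (f : X ⟶ Y) : Prop :=
  ∃ (Q : C) (_ : inAdd W Q) (a : X ⟶ Q) (b : Q ⟶ Y), f = a ≫ b

/-- An indecomposable object: nonzero, and in any direct sum decomposition one summand
vanishes. -/
def Indec (X : C) : Prop :=
  ¬ IsZero X ∧ ∀ Y Z : C, Nonempty (X ≅ Y ⊞ Z) → IsZero Y ∨ IsZero Z

/-- Data of the truncation functor `t^{≥ n}`, left adjoint to the inclusion of `T^{≥ n}`,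
together with its unit and the truncation triangles. -/
structure TruncGEData (t : TStructure C) (n : ℤ) where
  F : C ⥤ C
  η : 𝟭 C ⟶ F
  ge : ∀ X : C, t.ge n (F.obj X)
  tri : ∀ X : C, ∃ (Z : C) (_ : t.le (n - 1) Z) (f : Z ⟶ X) (h : F.obj X ⟶ Z⟦(1 : ℤ)⟧),
    Triangle.mk f (η.app X) h ∈ distTriang C
  adj : ∀ (X W : C), t.ge n W → Function.Bijective (fun g : F.obj X ⟶ W => η.app X ≫ g)

/-- Data of the truncation functor `t^{≤ n}`, right adjoint to the inclusion of `T^{≤ n}`,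
together with its counit and the truncation triangles. -/
structure TruncLEData (t : TStructure C) (n : ℤ) where
  F : C ⥤ C
  ε : F ⟶ 𝟭 C
  le : ∀ X : C, t.le n (F.obj X)
  tri : ∀ X : C, ∃ (Z : C) (_ : t.ge (n + 1) Z) (g : X ⟶ Z) (h : Z ⟶ (F.obj X)⟦(1 : ℤ)⟧),
    Triangle.mk (ε.app X) g h ∈ distTriang C
  adj : ∀ (W X : C), t.le n W → Function.Bijective (fun g : W ⟶ F.obj X => g ≫ ε.app X)

/-- Membership in the thick subcategory generated by `A`. -/
inductive thickMem (A : C) : C → Prop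
  | base : thickMem A A
  | zero : thickMem A 0
  | iso {X Y : C} : (X ≅ Y) → thickMem A X → thickMem A Y
  | shift (X : C) (n : ℤ) : thickMem A X → thickMem A (X⟦n⟧)
  | ext₂ {X Y Z : C} {f : X ⟶ Y} {g : Y ⟶ Z} {h : Z ⟶ X⟦(1 : ℤ)⟧} :
      (Triangle.mk f g h ∈ distTriang C) → thickMem A X → thickMem A Z → thickMem A Y
  | smd {X Y : C} (s : X ⟶ Y) (p : Y ⟶ X) : s ≫ p = 𝟙 X → thickMem A Y → thickMem A X

end Defs

/-- Abstraction of the derived category `D^fd(A)` of a proper connective dg algebra `A`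
over a field `k`, with its standard t-structure: `A` is connective (cohomology in
non-positive degrees), Hom-spaces are finite dimensional (properness), the standard
t-structure is bounded on `D^fd`, `A` is derived projective and `A` generates. -/
structure DGSetup (k : Type w) [Field k] (C : Type u) [Category.{v} C] [Preadditive C]
    [HasZeroObject C] [HasShift C ℤ] [∀ n : ℤ, (shiftFunctor C n).Additive]
    [Pretriangulated C] [Linear k C] where
  t : TStructure C
  A : C
  connective : t.le 0 A
  homFinite : ∀ X Y : C, FiniteDimensional k (X ⟶ Y)
  bounded : ∀ X : C, ∃ a b : ℤ, t.ge a X ∧ t.le b X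
  A_derived_projective : ∀ X : C, t.le 0 X → ∀ f : A ⟶ X⟦(1 : ℤ)⟧, f = 0
  generates : ∀ X : C, (∀ (n : ℤ) (f : A⟦n⟧ ⟶ X), f = 0) → IsZero X

section DG

variable {k : Type w} [Field k] {C : Type u} [Category.{v} C] [Preadditive C]
  [HasZeroObject C] [HasShift C ℤ] [∀ n : ℤ, (shiftFunctor C n).Additive]
  [Pretriangulated C] [Linear k C]

/-- A derived injective object of `D^fd(A)^{≥ 0}`. -/
def DerivedInjective (S : DGSetup k C) (I : C) : Prop :=
  S.t.ge 0 I ∧ ∀ X : C, S.t.ge 0 X → ∀ f : X ⟶ I⟦(1 : ℤ)⟧, f = 0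

variable [HasFiniteBiproducts C] [HasBinaryBiproducts C]

/-- The `k`-submodule of morphisms `X ⟶ Y` factoring through `add W`. -/
def addIdeal (k : Type w) [Field k] [Linear k C] (W : C) (X Y : C) : Submodule k (X ⟶ Y) :=
  Submodule.span k {f | factorsThruAdd W f}

end DG

variable {C : Type u} [Category.{v} C] [Preadditive C] [HasZeroObject C]
  [HasShift C ℤ] [∀ n : ℤ, (shiftFunctor C n).Additive] [Pretriangulated C]
  [HasFiniteBiproducts C] [HasBinaryBiproducts C]
  {k : Type w} [Field k] [Linear k C]

section Helpers
set_option linter.unusedSectionVars false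

variable (S : DGSetup k C)

/-- Transport vanishing of maps into a double shift. -/
lemma vshift₁ {B Z : C} (a b c : ℤ) (h : a + b = c)
    (hc : ∀ f : B ⟶ Z⟦c⟧, f = 0) : ∀ f : B ⟶ (Z⟦a⟧)⟦b⟧, f = 0 := by
  intro f
  rw [← cancel_mono ((shiftFunctorAdd' C a b c h).inv.app Z), zero_comp]
  exact hc _

lemma vshift₂ {B Z : C} (a b c : ℤ) (h : a + b = c)
    (hc : ∀ f : B ⟶ (Z⟦a⟧)⟦b⟧, f = 0) : ∀ f : B ⟶ Z⟦c⟧, f = 0 := by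
  intro f
  rw [← cancel_mono ((shiftFunctorAdd' C a b c h).hom.app Z), zero_comp]
  exact hc _

/-- Maps from a `≤ a` object to a `≥ b` object vanish when `a < b`. -/
lemma zeroHom (t : TStructure C) {X Y : C} (a b : ℤ) (hab : a < b)
    (hX : t.le a X) (hY : t.ge b Y) (f : X ⟶ Y) : f = 0 := by
  have hX' : t.le 0 (X⟦a⟧) := t.le_shift a a 0 (by omega) X hX
  have hY' : t.ge 1 (Y⟦a⟧) := t.ge_antitone (by omega : (1 : ℤ) ≤ b - a) _
    (t.ge_shift b a (b - a) (by omega) Y hY)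
  have : (shiftFunctor C a).map f = 0 := t.zero' _ hX' hY'
  apply (shiftFunctor C a).map_injective
  rw [this, Functor.map_zero]

/-- If all maps from `B` to the outer objects of a distinguished triangle vanish,
so do the maps to the middle object. -/
lemma vanish_mid {T : Triangle C} (hT : T ∈ distTriang C) {B : C}
    (h1 : ∀ g : B ⟶ T.obj₁, g = 0) (h3 : ∀ g : B ⟶ T.obj₃, g = 0)
    (f : B ⟶ T.obj₂) : f = 0 := by
  obtain ⟨g, hg⟩ := T.coyoneda_exact₂ hT f (by rw [h3 (f ≫ T.mor₂)])
  rw [hg, h1 g, zero_comp]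

/-- `Hom(A, W⟦j⟧) = 0` for `W ≤ 0` and `j ≥ 1`. -/
lemma projA {W : C} (hW : S.t.le 0 W) {j : ℤ} (hj : 1 ≤ j) :
    ∀ f : S.A ⟶ W⟦j⟧, f = 0 := by
  refine vshift₂ (j - 1) 1 j (by omega) ?_
  intro f
  exact S.A_derived_projective _ (S.t.le_monotone (by omega : (1 : ℤ) - j ≤ 0) _
    (S.t.le_shift 0 (j - 1) (1 - j) (by omega) W hW)) f

/-- `Hom(A, Y⟦j⟧) = 0` for `Y ≥ n` and `j < n`. -/
lemma geA {Y : C} {n j : ℤ} (hY : S.t.ge n Y) (hj : j < n) :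
    ∀ f : S.A ⟶ Y⟦j⟧, f = 0 := fun f =>
  zeroHom S.t 0 (n - j) (by omega) S.connective
    (S.t.ge_shift n j (n - j) (by omega) Y hY) f

/-- Reformulation of `generates`. -/
lemma gen' {Y : C} (h : ∀ j : ℤ, ∀ f : S.A ⟶ Y⟦j⟧, f = 0) : IsZero Y := by
  refine S.generates Y (fun n f => ?_)
  have h0 : (shiftFunctorCompIsoId C n (-n) (by omega)).inv.app S.A ≫
      (shiftFunctor C (-n)).map f = 0 := h (-n) _
  apply (shiftFunctor C (-n)).map_injective
  rw [Functor.map_zero]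
  calc (shiftFunctor C (-n)).map f
      = (shiftFunctorCompIsoId C n (-n) (by omega)).hom.app S.A ≫
        ((shiftFunctorCompIsoId C n (-n) (by omega)).inv.app S.A ≫
          (shiftFunctor C (-n)).map f) := by rw [← assoc, Iso.hom_inv_id_app, id_comp]
    _ = 0 := by rw [h0, comp_zero]

/-- Characterization of `≤ 0` via vanishing of `Hom(A, -⟦j⟧)`, `j ≥ 1`. -/
lemma LE_char {Y : C} (h : ∀ j : ℤ, 1 ≤ j → ∀ f : S.A ⟶ Y⟦j⟧, f = 0) :
    S.t.le 0 Y := by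
  obtain ⟨Z', Z'', hZ', hZ'', f, g, w, hT⟩ := S.t.exists_triangle Y 0 1 rfl
  have hz : IsZero Z'' := by
    refine gen' S (fun j φ => ?_)
    by_cases hj : 1 ≤ j
    · have hrot := Triangle.shift_distinguished _ (rot_of_distTriang _ hT) j
      refine vanish_mid hrot ?_ ?_ φ
      · exact h j hj
      · exact vshift₁ 1 j (1 + j) rfl (projA S hZ' (by omega))
    · exact zeroHom S.t 0 (1 - j) (by omega) S.connective
        (S.t.ge_shift 1 j (1 - j) (by omega) Z'' hZ'') φ
  have : IsIso f := (Triangle.isZero₃_iff_isIso₁ _ hT).1 hz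
  exact (S.t.le 0).prop_of_iso (asIso f) hZ'

/-- Characterization of `≥ n` via vanishing of `Hom(A, -⟦j⟧)`, `j < n`. -/
lemma GE_char {Y : C} (n : ℤ) (h : ∀ j : ℤ, j < n → ∀ f : S.A ⟶ Y⟦j⟧, f = 0) :
    S.t.ge n Y := by
  obtain ⟨W', W'', hW', hW'', f, g, w, hT⟩ := S.t.exists_triangle Y (n - 1) n (by omega)
  have hz : IsZero W' := by
    refine gen' S (fun j φ => ?_)
    by_cases hj : j < n
    · have hrot := Triangle.shift_distinguished _ (inv_rot_of_distTriang _ hT) j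
      refine vanish_mid hrot ?_ ?_ φ
      · exact vshift₁ (-1) j (j - 1) (by omega)
          (zeroHom S.t 0 (n - (j - 1)) (by omega) S.connective
            (S.t.ge_shift n (j - 1) (n - (j - 1)) (by omega) W'' hW''))
      · exact h j hj
    · exact vshift₂ (n - 1) (j - (n - 1)) j (by omega)
        (projA S (S.t.le_shift (n - 1) (n - 1) 0 (by omega) W' hW') (by omega)) φ
  have : IsIso g := (Triangle.isZero₁_iff_isIso₂ _ hT).1 hz
  exact (S.t.ge n).prop_of_iso (asIso g).symm hW''

/-- Vanishing of maps into shifts passes to `add`. -/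
lemma vadd {W X B : C} (hX : inAdd W X) {j : ℤ}
    (hW : ∀ f : B ⟶ W⟦j⟧, f = 0) : ∀ f : B ⟶ X⟦j⟧, f = 0 := by
  obtain ⟨n, s, p, hsp⟩ := hX
  intro f
  have tot : 𝟙 (⨁ fun _ : Fin n => W) = ∑ i : Fin n,
      biproduct.π (fun _ : Fin n => W) i ≫ biproduct.ι (fun _ : Fin n => W) i :=
    biproduct.total.symm
  have key : f ≫ (shiftFunctor C j).map s = 0 := by
    calc f ≫ (shiftFunctor C j).map s
        = (f ≫ (shiftFunctor C j).map s) ≫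
            (shiftFunctor C j).map (𝟙 (⨁ fun _ : Fin n => W)) := by
          rw [(shiftFunctor C j).map_id, comp_id]
      _ = ∑ i : Fin n, (f ≫ (shiftFunctor C j).map s) ≫
            (shiftFunctor C j).map (biproduct.π (fun _ : Fin n => W) i ≫
              biproduct.ι (fun _ : Fin n => W) i) := by
          rw [tot, CategoryTheory.Functor.map_sum, Preadditive.comp_sum]
      _ = 0 := Finset.sum_eq_zero fun i _ => by
          rw [(shiftFunctor C j).map_comp, ← assoc,
            hW ((f ≫ (shiftFunctor C j).map s) ≫
              (shiftFunctor C j).map (biproduct.π (fun _ : Fin n => W) i)), zero_comp]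
  calc f = f ≫ (shiftFunctor C j).map (s ≫ p) := by
        rw [hsp, (shiftFunctor C j).map_id, comp_id]
    _ = (f ≫ (shiftFunctor C j).map s) ≫ (shiftFunctor C j).map p := by
        rw [(shiftFunctor C j).map_comp, assoc]
    _ = 0 := by rw [key, zero_comp]

/-- Vanishing of maps out of `W` passes to maps out of `add W`. -/
lemma vaddOut {W X Z : C} (hX : inAdd W X) (hW : ∀ g : W ⟶ Z, g = 0)
    (f : X ⟶ Z) : f = 0 := by
  obtain ⟨n, s, p, hsp⟩ := hX
  have tot : 𝟙 (⨁ fun _ : Fin n => W) = ∑ i : Fin n,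
      biproduct.π (fun _ : Fin n => W) i ≫ biproduct.ι (fun _ : Fin n => W) i :=
    biproduct.total.symm
  have hp : p ≫ f = 0 := by
    calc p ≫ f = 𝟙 (⨁ fun _ : Fin n => W) ≫ (p ≫ f) := (id_comp _).symm
      _ = ∑ i : Fin n, (biproduct.π (fun _ : Fin n => W) i ≫
            biproduct.ι (fun _ : Fin n => W) i) ≫ (p ≫ f) := by
          rw [tot, Preadditive.sum_comp]
      _ = 0 := Finset.sum_eq_zero fun i _ => by
          rw [assoc, hW (biproduct.ι (fun _ : Fin n => W) i ≫ (p ≫ f)), comp_zero]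
  calc f = s ≫ (p ≫ f) := by rw [← assoc, hsp, id_comp]
    _ = 0 := by rw [hp, comp_zero]

/-- Objects of `add A` lie in the extended heart. -/
lemma add_mem_Hd (d : ℕ) (hA : S.A ∈ Hd S.t d) {P : C} (hP : inAdd S.A P) :
    P ∈ Hd S.t d :=
  ⟨LE_char S (fun _ hj => vadd hP (projA S hA.1 hj)),
   GE_char S _ (fun _ hj => vadd hP (geA S hA.2 hj))⟩

/-- Objects of `add A` are projective in the extended heart. -/
lemma add_proj (d : ℕ) {P : C} (hP : inAdd S.A P) : projOn (Hd S.t d) P :=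
  fun _ hX f => vaddOut hP (fun g => S.A_derived_projective _ hX.1 g) f

/-- The approximation: every object of `H^d` receives a deflation from an object
of `add A`. -/
lemma approx (d : ℕ) (hA : S.A ∈ Hd S.t d) :
    ∀ X ∈ Hd S.t d, ∃ (P : C) (_ : inAdd S.A P) (_ : P ∈ Hd S.t d) (p : P ⟶ X),
      isDeflation (Hd S.t d) p := by
  intro X hX
  haveI := S.homFinite S.A X
  set n := Module.finrank k (S.A ⟶ X) with hn
  let b := Module.finBasis k (S.A ⟶ X)
  let P : C := ⨁ fun _ : Fin n => S.A
  let p : P ⟶ X := biproduct.desc fun i => b i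
  have hPadd : inAdd S.A P := ⟨n, 𝟙 _, 𝟙 _, by simp⟩
  have hlift : ∀ g : S.A ⟶ X, ∃ ℓ : S.A ⟶ P, ℓ ≫ p = g := by
    intro g
    refine ⟨biproduct.lift fun i => (b.repr g i) • 𝟙 S.A, ?_⟩
    rw [biproduct.lift_desc]
    have : ∀ j : Fin n, ((b.repr g j) • 𝟙 S.A) ≫ b j = (b.repr g j) • b j := by
      intro j; rw [Linear.smul_comp, id_comp]
    rw [Finset.sum_congr rfl (fun j _ => this j)]
    exact b.sum_repr g
  obtain ⟨L, f0, w, hT⟩ := distinguished_cocone_triangle₁ p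
  have hVP : ∀ j : ℤ, 1 ≤ j → ∀ f : S.A ⟶ P⟦j⟧, f = 0 :=
    fun _ hj => vadd hPadd (projA S hA.1 hj)
  have hL : L ∈ Hd S.t d := by
    constructor
    · refine LE_char S (fun j hj φ => ?_)
      by_cases h2 : 2 ≤ j
      · have hrot := Triangle.shift_distinguished _
          (inv_rot_of_distTriang _ hT) j
        refine vanish_mid hrot ?_ ?_ φ
        · exact vshift₁ (-1) j (j - 1) (by omega) (projA S hX.1 (by omega))
        · exact hVP j hj
      · have hj1 : j = 1 := by omega
        subst hj1
        obtain ⟨g, hg⟩ := Triangle.coyoneda_exact₁ _ hT φ (hVP 1 le_rfl _)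
        obtain ⟨ℓ, hℓ⟩ := hlift g
        have hz : p ≫ w = 0 := comp_distTriang_mor_zero₂₃ _ hT
        rw [hg, ← hℓ]
        change (ℓ ≫ p) ≫ w = 0
        rw [assoc, hz, comp_zero]
    · refine GE_char S _ (fun j hj φ => ?_)
      have hrot := Triangle.shift_distinguished _
        (inv_rot_of_distTriang _ hT) j
      refine vanish_mid hrot ?_ ?_ φ
      · exact vshift₁ (-1) j (j - 1) (by omega) (geA S hX.2 (by omega))
      · exact vadd hPadd (geA S hA.2 hj)
  exact ⟨P, hPadd, add_mem_Hd S d hA hPadd, p, L, hL, f0, w, hT⟩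

end Helpers

/-- For `A ∈ H^d`, the extended heart `H^d` has enough projectives and
its projective objects are exactly `add(A)`. -/
theorem stmt8 (S : DGSetup k C) (d : ℕ) (hd : 1 ≤ d) (hA : S.A ∈ Hd S.t d) :
    (∀ X ∈ Hd S.t d, ∃ (P : C) (_ : inAdd S.A P) (_ : P ∈ Hd S.t d) (p : P ⟶ X),
      isDeflation (Hd S.t d) p) ∧
    (∀ P : C, (P ∈ Hd S.t d ∧ projOn (Hd S.t d) P) ↔ inAdd S.A P) := by
  refine ⟨approx S d hA, fun P => ⟨?_, fun hP => ⟨add_mem_Hd S d hA hP, add_proj S d hP⟩⟩⟩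
  rintro ⟨hP, hproj⟩
  obtain ⟨Q, hQadd, hQHd, q, L, hL, f0, w, hT⟩ := approx S d hA P hP
  have hw : w = 0 := hproj L hL w
  obtain ⟨g, hg⟩ : ∃ g : P ⟶ Q, 𝟙 P = g ≫ q := Triangle.coyoneda_exact₃ _ hT (𝟙 P)
    (by change 𝟙 P ≫ w = 0; rw [hw, comp_zero])
  obtain ⟨m, s, pr, hspr⟩ := hQadd
  refine ⟨m, g ≫ s, pr ≫ q, ?_⟩
  calc (g ≫ s) ≫ pr ≫ q = g ≫ (s ≫ pr) ≫ q := by simp only [assoc]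
    _ = g ≫ q := by rw [hspr]; simp
    _ = 𝟙 P := hg.symm

end Paper
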